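/- For any probability measure D on X×Y and any probability measure Q on H, the first and second moments of the margin satisfy the identities E_{(x,y)~D}[ y · E_{h~Q}[h(x)] ] = 1 − 2·r_D(Q) and E_{x~D_X}[ (E_{h~Q}[h(x)])² ] = 1 − 2·d_D(Q); in particular d_D(Q) ≤ 1/2, and if r_D(Q) < 1/2 then d_D(Q) < 1/2. -/

import Mathlib

open MeasureTheory

variable {X H : Type*} [MeasurableSpace X] [MeasurableSpace H]

/-- Gibbs risk: `r_D(Q) = E_{h~Q} P_{(x,y)~D}[h(x) ≠ y]`. -/
noncomputable def gibbsRisk (D : Measure (X × ℝ)) (Q : Measure H) (f : H → X → ℝ) : ℝ :=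
  ∫ h, (D {p | f h p.1 ≠ p.2}).toReal ∂Q

/-- Expected disagreement: `d_D(Q) = E_{h1~Q} E_{h2~Q} P_{x~D_X}[h1(x) ≠ h2(x)]`. -/
noncomputable def disagreement (D : Measure (X × ℝ)) (Q : Measure H) (f : H → X → ℝ) : ℝ :=
  ∫ h₁, ∫ h₂, ((D.map Prod.fst) {x | f h₁ x ≠ f h₂ x}).toReal ∂Q ∂Q

/-- Expected joint error: `e_D(Q) = E_{h1~Q} E_{h2~Q} P_{(x,y)~D}[h1(x) ≠ y ∧ h2(x) ≠ y]`. -/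
noncomputable def jointError (D : Measure (X × ℝ)) (Q : Measure H) (f : H → X → ℝ) : ℝ :=
  ∫ h₁, ∫ h₂, (D {p | f h₁ p.1 ≠ p.2 ∧ f h₂ p.1 ≠ p.2}).toReal ∂Q ∂Q

/-- Key pointwise/integral identity: for ±1-valued functions,
`∫ g₁ g₂ = 1 - 2 μ{g₁ ≠ g₂}`. -/
lemma integral_pm_mul {α : Type*} [MeasurableSpace α] (μ : Measure α)
    [IsProbabilityMeasure μ] {g₁ g₂ : α → ℝ}
    (hs : MeasurableSet {a | g₁ a ≠ g₂ a})
    (hv : ∀ᵐ a ∂μ, (g₁ a = 1 ∨ g₁ a = -1) ∧ (g₂ a = 1 ∨ g₂ a = -1)) :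
    ∫ a, g₁ a * g₂ a ∂μ = 1 - 2 * (μ {a | g₁ a ≠ g₂ a}).toReal := by
  set s := {a | g₁ a ≠ g₂ a} with hsdef
  have hcong : ∀ᵐ a ∂μ, g₁ a * g₂ a
      = (fun a => 1 - 2 * s.indicator (fun _ => (1 : ℝ)) a) a := by
    filter_upwards [hv] with a ha
    obtain ⟨h1, h2⟩ := ha
    by_cases hab : g₁ a = g₂ a
    · have hm : a ∉ s := by simp [hsdef, hab]
      rw [Set.indicator_of_notMem hm]
      rcases h2 with h | h <;> simp [hab, h]
    · have hm : a ∈ s := hab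
      rw [Set.indicator_of_mem hm]
      rcases h1 with h | h <;> rcases h2 with h' | h' <;>
        simp [h, h'] at hab ⊢ <;> norm_num
  rw [integral_congr_ae hcong]
  have hint : Integrable (fun a => 2 * s.indicator (fun _ => (1 : ℝ)) a) μ :=
    ((integrable_const (1 : ℝ)).indicator hs).const_mul 2
  rw [integral_sub (integrable_const 1) hint, integral_const, integral_const_mul,
    integral_indicator_const (1 : ℝ) hs]
  simp [Measure.real]

/-- Margin identities. -/
theorem margin_moments
    (D : Measure (X × ℝ)) [IsProbabilityMeasure D]
    (Q : Measure H) [IsProbabilityMeasure Q]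
    (f : H → X → ℝ)
    (hf : Measurable fun p : H × X => f p.1 p.2)
    (hvals : ∀ h x, f h x = 1 ∨ f h x = -1)
    (hlabels : ∀ᵐ p ∂D, p.2 = 1 ∨ p.2 = -1) :
    (∫ p, p.2 * ∫ h, f h p.1 ∂Q ∂D) = 1 - 2 * gibbsRisk D Q f ∧
    (∫ x, (∫ h, f h x ∂Q) ^ 2 ∂(D.map Prod.fst)) = 1 - 2 * disagreement D Q f ∧
    disagreement D Q f ≤ 1 / 2 ∧
    (gibbsRisk D Q f < 1 / 2 → disagreement D Q f < 1 / 2) := by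
  classical
  set μ : Measure X := D.map Prod.fst with hμdef
  haveI : IsProbabilityMeasure μ := Measure.isProbabilityMeasure_map measurable_fst.aemeasurable
  set M : X → ℝ := fun x => ∫ h, f h x ∂Q with hMdef
  have hfx : ∀ h, Measurable (f h) := fun h => hf.comp measurable_prodMk_left
  have hfone : ∀ h x, |f h x| = 1 := by
    intro h x; rcases hvals h x with h' | h' <;> simp [h']
  have hswap : Measurable fun q : X × H => f q.2 q.1 := hf.comp measurable_swap
  have hM : Measurable M :=
    (hswap.stronglyMeasurable.integral_prod_right' (ν := Q)).measurable
  have hMbd : ∀ x, |M x| ≤ 1 := by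
    intro x
    have h1 : |M x| ≤ ∫ h, |f h x| ∂Q := by
      simpa using norm_integral_le_integral_norm (fun h => f h x) (μ := Q)
    have h2 : (∫ h, |f h x| ∂Q) = 1 := by
      rw [show (fun h => |f h x|) = fun _ => (1 : ℝ) from funext fun h => hfone h x]
      simp
    linarith
  -- measurability of the disagreement sets
  have hsetG : ∀ h, MeasurableSet {p : X × ℝ | f h p.1 ≠ p.2} := by
    intro h
    exact (measurableSet_eq_fun ((hfx h).comp measurable_fst) measurable_snd).compl
  have hsetD : ∀ h₁ h₂, MeasurableSet {x | f h₁ x ≠ f h₂ x} := by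
    intro h₁ h₂
    exact (measurableSet_eq_fun (hfx h₁) (hfx h₂)).compl
  -- integrability of the Gibbs risk integrand
  have hrG : Measurable fun h => (D {p : X × ℝ | f h p.1 ≠ p.2}).toReal := by
    have hS : MeasurableSet {q : H × (X × ℝ) | f q.1 q.2.1 ≠ q.2.2} :=
      (measurableSet_eq_fun (hf.comp
        (measurable_fst.prodMk (measurable_fst.comp measurable_snd)))
        (measurable_snd.comp measurable_snd)).compl
    exact (measurable_measure_prodMk_left hS).ennreal_toReal
  have hrGint : Integrable (fun h => (D {p : X × ℝ | f h p.1 ≠ p.2}).toReal) Q := by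
    refine Integrable.mono' (integrable_const (1 : ℝ))
      hrG.aestronglyMeasurable (Filter.Eventually.of_forall fun h => ?_)
    rw [Real.norm_eq_abs, abs_of_nonneg ENNReal.toReal_nonneg]
    exact ENNReal.toReal_le_of_le_ofReal zero_le_one (by simpa using prob_le_one)
  -- First identity
  have part1 : (∫ p, p.2 * M p.1 ∂D) = 1 - 2 * gibbsRisk D Q f := by
    have e1 : (∫ p, p.2 * M p.1 ∂D) = ∫ p, ∫ h, p.2 * f h p.1 ∂Q ∂D := by
      refine integral_congr_ae (Filter.Eventually.of_forall fun p => ?_)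
      exact (integral_const_mul p.2 fun h => f h p.1).symm
    have hInt : Integrable (Function.uncurry fun (p : X × ℝ) (h : H) =>
        p.2 * f h p.1) (D.prod Q) := by
      have hmeas : Measurable fun z : (X × ℝ) × H => z.1.2 * f z.2 z.1.1 :=
        (measurable_snd.comp measurable_fst).mul
          (hf.comp (measurable_snd.prodMk (measurable_fst.comp measurable_fst)))
      refine Integrable.mono' (integrable_const (1 : ℝ))
        hmeas.aestronglyMeasurable ?_
      have hl : ∀ᵐ z : (X × ℝ) × H ∂(D.prod Q), z.1.2 = 1 ∨ z.1.2 = -1 :=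
        Measure.quasiMeasurePreserving_fst.ae hlabels
      filter_upwards [hl] with z hz
      simp only [Function.uncurry, Real.norm_eq_abs]
      rw [abs_mul, hfone]
      rcases hz with h | h <;> simp [h]
    have e2 : (∫ p, ∫ h, p.2 * f h p.1 ∂Q ∂D)
        = ∫ h, ∫ p, p.2 * f h p.1 ∂D ∂Q := integral_integral_swap hInt
    have e3 : ∀ h, (∫ p, p.2 * f h p.1 ∂D)
        = 1 - 2 * (D {p : X × ℝ | f h p.1 ≠ p.2}).toReal := by
      intro h
      have := integral_pm_mul D (g₁ := fun p : X × ℝ => f h p.1)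
        (g₂ := fun p : X × ℝ => p.2) (hsetG h)
        (by filter_upwards [hlabels] with p hp; exact ⟨hvals h p.1, hp⟩)
      rw [← this]
      exact integral_congr_ae (Filter.Eventually.of_forall fun p => mul_comm _ _)
    rw [e1, e2]
    rw [integral_congr_ae (Filter.Eventually.of_forall e3),
      integral_sub (integrable_const 1) (hrGint.const_mul 2),
      integral_const, integral_const_mul]
    simp [gibbsRisk]
  -- measurability/integrability for the disagreement part
  have hd2 : Measurable fun q : H × H => (μ {x | f q.1 x ≠ f q.2 x}).toReal := by
    have hU : MeasurableSet {q : (H × H) × X | f q.1.1 q.2 ≠ f q.1.2 q.2} :=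
      (measurableSet_eq_fun
        (hf.comp ((measurable_fst.comp measurable_fst).prodMk measurable_snd))
        (hf.comp ((measurable_snd.comp measurable_fst).prodMk measurable_snd))).compl
    exact (measurable_measure_prodMk_left hU).ennreal_toReal
  have hdbd : ∀ q : H × H, |(μ {x | f q.1 x ≠ f q.2 x}).toReal| ≤ 1 := by
    intro q
    rw [abs_of_nonneg ENNReal.toReal_nonneg]
    exact ENNReal.toReal_le_of_le_ofReal zero_le_one (by simpa using prob_le_one)
  have hd2int : ∀ h₁, Integrable
      (fun h₂ => (μ {x | f h₁ x ≠ f h₂ x}).toReal) Q := by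
    intro h₁
    refine Integrable.mono' (integrable_const (1 : ℝ))
      ((hd2.comp (measurable_const.prodMk measurable_id)).aestronglyMeasurable)
      (Filter.Eventually.of_forall fun h₂ => hdbd (h₁, h₂))
  have hd1meas : Measurable fun h₁ => ∫ h₂, (μ {x | f h₁ x ≠ f h₂ x}).toReal ∂Q :=
    (hd2.stronglyMeasurable.integral_prod_right' (ν := Q)).measurable
  have hd1int : Integrable
      (fun h₁ => ∫ h₂, (μ {x | f h₁ x ≠ f h₂ x}).toReal ∂Q) Q := by
    refine Integrable.mono' (integrable_const (1 : ℝ))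
      hd1meas.aestronglyMeasurable (Filter.Eventually.of_forall fun h₁ => ?_)
    rw [Real.norm_eq_abs]
    have h1 : |∫ h₂, (μ {x | f h₁ x ≠ f h₂ x}).toReal ∂Q|
        ≤ ∫ h₂, |(μ {x | f h₁ x ≠ f h₂ x}).toReal| ∂Q := by
      simpa using norm_integral_le_integral_norm
        (fun h₂ => (μ {x | f h₁ x ≠ f h₂ x}).toReal) (μ := Q)
    have h2 : (∫ h₂, |(μ {x | f h₁ x ≠ f h₂ x}).toReal| ∂Q) ≤ ∫ _ : H, (1:ℝ) ∂Q := by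
      refine integral_mono_of_nonneg (Filter.Eventually.of_forall fun h₂ => abs_nonneg _)
        (integrable_const 1) (Filter.Eventually.of_forall fun h₂ => hdbd (h₁, h₂))
    simp only [integral_const, probReal_univ, measure_univ, ENNReal.toReal_one, smul_eq_mul,
      one_mul] at h2
    linarith
  -- Second identity
  have part2 : (∫ x, (M x) ^ 2 ∂μ) = 1 - 2 * disagreement D Q f := by
    have e1 : (∫ x, (M x) ^ 2 ∂μ) = ∫ x, ∫ h₁, f h₁ x * M x ∂Q ∂μ := by
      refine integral_congr_ae (Filter.Eventually.of_forall fun x => ?_)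
      show M x ^ 2 = ∫ h₁, f h₁ x * M x ∂Q
      rw [sq]
      exact (integral_mul_const (M x) fun h => f h x).symm
    have hInt1 : Integrable (Function.uncurry fun (x : X) (h₁ : H) =>
        f h₁ x * M x) (μ.prod Q) := by
      have hmeas : Measurable fun z : X × H => f z.2 z.1 * M z.1 :=
        hswap.mul (hM.comp measurable_fst)
      refine Integrable.mono' (integrable_const (1 : ℝ))
        hmeas.aestronglyMeasurable (Filter.Eventually.of_forall fun z => ?_)
      simp only [Function.uncurry, Real.norm_eq_abs]
      rw [abs_mul, hfone, one_mul]
      exact hMbd z.1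
    have e2 : (∫ x, ∫ h₁, f h₁ x * M x ∂Q ∂μ)
        = ∫ h₁, ∫ x, f h₁ x * M x ∂μ ∂Q := integral_integral_swap hInt1
    have e3 : ∀ h₁, (∫ x, f h₁ x * M x ∂μ)
        = 1 - 2 * ∫ h₂, (μ {x | f h₁ x ≠ f h₂ x}).toReal ∂Q := by
      intro h₁
      have e3a : (∫ x, f h₁ x * M x ∂μ)
          = ∫ x, ∫ h₂, f h₁ x * f h₂ x ∂Q ∂μ := by
        refine integral_congr_ae (Filter.Eventually.of_forall fun x => ?_)
        exact (integral_const_mul (f h₁ x) fun h₂ => f h₂ x).symm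
      have hInt2 : Integrable (Function.uncurry fun (x : X) (h₂ : H) =>
          f h₁ x * f h₂ x) (μ.prod Q) := by
        have hmeas : Measurable fun z : X × H => f h₁ z.1 * f z.2 z.1 :=
          ((hfx h₁).comp measurable_fst).mul hswap
        refine Integrable.mono' (integrable_const (1 : ℝ))
          hmeas.aestronglyMeasurable (Filter.Eventually.of_forall fun z => ?_)
        simp only [Function.uncurry, Real.norm_eq_abs]
        rw [abs_mul, hfone, hfone, one_mul]
      have e3b : (∫ x, ∫ h₂, f h₁ x * f h₂ x ∂Q ∂μ)
          = ∫ h₂, ∫ x, f h₁ x * f h₂ x ∂μ ∂Q := integral_integral_swap hInt2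
      have e3c : ∀ h₂, (∫ x, f h₁ x * f h₂ x ∂μ)
          = 1 - 2 * (μ {x | f h₁ x ≠ f h₂ x}).toReal := fun h₂ =>
        integral_pm_mul μ (hsetD h₁ h₂)
          (Filter.Eventually.of_forall fun x => ⟨hvals h₁ x, hvals h₂ x⟩)
      rw [e3a, e3b, integral_congr_ae (Filter.Eventually.of_forall e3c),
        integral_sub (integrable_const 1) ((hd2int h₁).const_mul 2),
        integral_const, integral_const_mul]
      simp
    rw [e1, e2, integral_congr_ae (Filter.Eventually.of_forall e3),
      integral_sub (integrable_const 1) (hd1int.const_mul 2),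
      integral_const, integral_const_mul]
    simp [disagreement, hμdef]
  -- Third: d ≤ 1/2
  have hsqnn : 0 ≤ ∫ x, (M x) ^ 2 ∂μ :=
    integral_nonneg fun x => sq_nonneg _
  have part3 : disagreement D Q f ≤ 1 / 2 := by
    rw [part2] at hsqnn; linarith
  -- Fourth: Cauchy–Schwarz via variance
  have part4 : gibbsRisk D Q f < 1 / 2 → disagreement D Q f < 1 / 2 := by
    intro hr
    set g : X × ℝ → ℝ := fun p => p.2 * M p.1 with hgdef
    have hgmeas : Measurable g := measurable_snd.mul (hM.comp measurable_fst)
    have hgl2 : MemLp g 2 D := by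
      refine MemLp.of_bound hgmeas.aestronglyMeasurable 1 ?_
      filter_upwards [hlabels] with p hp
      rw [Real.norm_eq_abs, hgdef, abs_mul]
      rcases hp with h | h <;> simp [h] <;> exact hMbd p.1
    have hvar := ProbabilityTheory.variance_eq_sub hgl2
    have hvnn := ProbabilityTheory.variance_nonneg g D
    rw [hvar] at hvnn
    have hsq : (∫ p, (g ^ 2) p ∂D) = ∫ x, (M x) ^ 2 ∂μ := by
      have e1 : (∫ p, (g ^ 2) p ∂D) = ∫ p, (M p.1) ^ 2 ∂D := by
        refine integral_congr_ae ?_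
        filter_upwards [hlabels] with p hp
        rcases hp with h | h <;> simp [hgdef, mul_pow, h]
      rw [e1, hμdef, integral_map measurable_fst.aemeasurable
        ((hM.pow_const 2).aestronglyMeasurable)]
    rw [hsq, part2] at hvnn
    have hg1 : (∫ p, g p ∂D) = 1 - 2 * gibbsRisk D Q f := part1
    rw [hg1] at hvnn
    nlinarith
  exact ⟨part1, part2, part3, part4⟩
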